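/- arXiv:1903.02066 — 2 statements merged into one kernel-verified Lean document; each statement's English description precedes it below -/
import Mathlib

section
/- Let A ∈ ℝ^{n×n} and suppose every eigenvalue λ ∈ ℂ of A satisfies Re(λ) < 0 or λ = 0. Then for every z ∈ ℂ with Re(z) > 0, the matrix z·I_n − A is invertible, the function t ↦ exp(t(A − z·I_n)) is Bochner integrable on [0,∞), and (z·I_n − A)^{−1} = ∫_0^∞ exp(t(A − z·I_n)) dt = ∫_0^∞ e^{−zt} exp(tA) dt. -/
open MeasureTheory Matrix Complex Set

noncomputable section

open NormedSpace Polynomial Filter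
open scoped NNReal ENNReal Topology

namespace St17
variable {N : ℕ}

section Aux
attribute [local instance] Matrix.linftyOpNormedRing Matrix.linftyOpNormedAlgebra
@[reducible] def matTop : TopologicalSpace (Matrix (Fin N) (Fin N) ℂ) :=
  (Matrix.linftyOpNormedRing (n := Fin N) (α := ℂ)).toMetricSpace.toPseudoMetricSpace.toUniformSpace.toTopologicalSpace
attribute [local instance] matTop

lemma mem_spectrum_iff_det (B : Matrix (Fin N) (Fin N) ℂ) (lam : ℂ) :
    lam ∈ spectrum ℂ B ↔ (lam • (1 : Matrix (Fin N) (Fin N) ℂ) - B).det = 0 := by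
  rw [spectrum.mem_iff, Matrix.isUnit_iff_isUnit_det, isUnit_iff_ne_zero, not_ne_iff,
    Algebra.algebraMap_eq_smul_one]

lemma pow_mulVec (B : Matrix (Fin N) (Fin N) ℂ) (v : Fin N → ℂ) (lam : ℂ)
    (hv : B.mulVec v = lam • v) (k : ℕ) : (B ^ k).mulVec v = lam ^ k • v := by
  induction k with
  | zero => simp [Matrix.one_mulVec]
  | succ k ih =>
      rw [pow_succ', pow_succ', ← Matrix.mulVec_mulVec, ih, Matrix.mulVec_smul, hv,
        smul_smul, mul_comm]

/-- mulVec by fixed vector as a CLM in the matrix -/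
def mulVecCLM (v : Fin N → ℂ) : Matrix (Fin N) (Fin N) ℂ →L[ℂ] (Fin N → ℂ) :=
  LinearMap.toContinuousLinearMap
    { toFun := fun M => M.mulVec v
      map_add' := fun M M' => Matrix.add_mulVec M M' v
      map_smul' := fun c M => Matrix.smul_mulVec c M v }

lemma exp_mulVec (B : Matrix (Fin N) (Fin N) ℂ) (v : Fin N → ℂ) (lam : ℂ)
    (hv : B.mulVec v = lam • v) :
    (NormedSpace.exp B).mulVec v = Complex.exp lam • v := by
  have hsum : Summable fun k : ℕ => (k.factorial⁻¹ : ℂ) • B ^ k := expSeries_summable' B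
  have hs2 : Summable fun k : ℕ => (k.factorial⁻¹ : ℂ) * lam ^ k := by
    simpa [smul_eq_mul] using expSeries_summable' (𝕂 := ℂ) lam
  have h1 : (NormedSpace.exp B).mulVec v = mulVecCLM v (NormedSpace.exp B) := rfl
  rw [h1, exp_eq_tsum (𝕂 := ℂ), (mulVecCLM v).map_tsum hsum]
  have h2 : ∀ k : ℕ, mulVecCLM v ((k.factorial⁻¹ : ℂ) • B ^ k)
      = ((k.factorial⁻¹ : ℂ) * lam ^ k) • v := by
    intro k
    rw [(mulVecCLM v).map_smul]
    show (k.factorial⁻¹ : ℂ) • (B ^ k).mulVec v = _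
    rw [pow_mulVec B v lam hv k, smul_smul]
  rw [tsum_congr h2, hs2.tsum_smul_const]
  congr 1
  rw [Complex.exp_eq_exp_ℂ, exp_eq_tsum (𝕂 := ℂ)]
  exact tsum_congr fun k => rfl

lemma aeval_mulVec (B : Matrix (Fin N) (Fin N) ℂ) (v : Fin N → ℂ) (lam : ℂ)
    (hv : B.mulVec v = lam • v) (p : ℂ[X]) :
    (aeval B p).mulVec v = p.eval lam • v := by
  induction p using Polynomial.induction_on' with
  | add p q hp hq => rw [map_add, Matrix.add_mulVec, hp, hq, eval_add, add_smul]
  | monomial k c =>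
      rw [aeval_monomial, eval_monomial, Algebra.algebraMap_eq_smul_one, smul_mul_assoc,
        one_mul, Matrix.smul_mulVec, pow_mulVec B v lam hv k, smul_smul]

lemma exp_mem_adjoin (B : Matrix (Fin N) (Fin N) ℂ) :
    ∃ q : ℂ[X], aeval B q = NormedSpace.exp B := by
  have hsum : Summable fun k : ℕ => (k.factorial⁻¹ : ℂ) • B ^ k := expSeries_summable' B
  have hmem : NormedSpace.exp B ∈ Algebra.adjoin ℂ ({B} : Set (Matrix (Fin N) (Fin N) ℂ)) := by
    set S : Submodule ℂ (Matrix (Fin N) (Fin N) ℂ) :=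
      Subalgebra.toSubmodule (Algebra.adjoin ℂ ({B} : Set (Matrix (Fin N) (Fin N) ℂ))) with hS
    have hclosed : IsClosed (S : Set (Matrix (Fin N) (Fin N) ℂ)) :=
      Submodule.closed_of_finiteDimensional S
    rw [← Subalgebra.mem_toSubmodule, ← hS]
    have htend := hsum.hasSum.tendsto_sum_nat
    rw [exp_eq_tsum (𝕂 := ℂ)]
    refine hclosed.mem_of_tendsto htend (Filter.Eventually.of_forall fun m => ?_)
    refine Submodule.sum_mem _ fun k _ => Submodule.smul_mem _ _ ?_
    rw [hS, Subalgebra.mem_toSubmodule]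
    exact Subalgebra.pow_mem _ (Algebra.self_mem_adjoin_singleton ℂ B) k
  rw [Algebra.adjoin_singleton_eq_range_aeval] at hmem
  exact hmem

lemma spectrum_exp (hN : 0 < N) (B : Matrix (Fin N) (Fin N) ℂ) (mu : ℂ)
    (hmu : mu ∈ spectrum ℂ (NormedSpace.exp B)) :
    ∃ lam ∈ spectrum ℂ B, mu = Complex.exp lam := by
  haveI : Nonempty (Fin N) := ⟨⟨0, hN⟩⟩
  obtain ⟨q, hq⟩ := exp_mem_adjoin B
  rw [← hq, spectrum.map_polynomial_aeval] at hmu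
  obtain ⟨lam, hlam, hev⟩ := hmu
  refine ⟨lam, hlam, ?_⟩
  -- get eigenvector
  have hdet : (lam • (1 : Matrix (Fin N) (Fin N) ℂ) - B).det = 0 :=
    (mem_spectrum_iff_det B lam).mp hlam
  obtain ⟨v, hv0, hv⟩ := (Matrix.exists_mulVec_eq_zero_iff).mpr hdet
  have hBv : B.mulVec v = lam • v := by
    have h := hv
    rw [Matrix.sub_mulVec, sub_eq_zero, Matrix.smul_mulVec, Matrix.one_mulVec] at h
    exact h.symm
  have h1 := exp_mulVec B v lam hBv
  have h2 := aeval_mulVec B v lam hBv q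
  have hev' : eval lam q = mu := hev
  rw [hq, h1] at h2
  obtain ⟨i, hi⟩ : ∃ i, v i ≠ 0 := Function.ne_iff.mp hv0
  have hii := congrFun h2 i
  simp only [Pi.smul_apply, smul_eq_mul] at hii
  rw [← hev']
  exact (mul_right_cancel₀ hi hii).symm


lemma norm_exp_decay (hN : 0 < N) (B : Matrix (Fin N) (Fin N) ℂ)
    (hB : ∀ lam ∈ spectrum ℂ B, lam.re < 0)
    (hspec : ∀ mu ∈ spectrum ℂ (NormedSpace.exp B), ∃ lam ∈ spectrum ℂ B, mu = Complex.exp lam) :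
    ∃ C δ : ℝ, 0 < δ ∧ ∀ t : ℝ, 0 ≤ t → ‖NormedSpace.exp ((t : ℂ) • B)‖ ≤ C * Real.exp (-δ * t) := by
  haveI : Nonempty (Fin N) := ⟨⟨0, hN⟩⟩
  -- spectral radius of exp B is < 1
  have hsr : spectralRadius ℂ (NormedSpace.exp B) < (1 : ℝ≥0) := by
    refine spectrum.spectralRadius_lt_of_forall_lt _ fun mu hmu => ?_
    obtain ⟨lam, hlam, rfl⟩ := hspec mu hmu
    have : ‖Complex.exp lam‖ < 1 := by
      rw [Complex.norm_exp]
      exact Real.exp_lt_one_iff.mpr (hB lam hlam)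
    exact_mod_cast this
  obtain ⟨c, hsc, hc1⟩ := ENNReal.lt_iff_exists_nnreal_btwn.mp hsr
  have c0 : (0 : ℝ≥0) < c := by
    have : (0 : ℝ≥0∞) < (c : ℝ≥0∞) := lt_of_le_of_lt bot_le hsc
    exact_mod_cast this
  have c1 : c < 1 := by exact_mod_cast hc1
  set cR : ℝ := (c : ℝ) with hcR
  have c0R : (0 : ℝ) < cR := c0
  have c1R : cR < 1 := c1
  -- Gelfand
  have htend := spectrum.pow_nnnorm_pow_one_div_tendsto_nhds_spectralRadius (NormedSpace.exp B)
  have hev : ∀ᶠ k : ℕ in atTop, (‖(NormedSpace.exp B) ^ k‖₊ : ℝ≥0∞) ^ (1 / (k : ℝ)) < (c : ℝ≥0∞) :=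
    htend.eventually_lt_const hsc
  obtain ⟨K0, hK0⟩ := eventually_atTop.mp hev
  set K : ℕ := max K0 1 with hK
  have hpow : ∀ k : ℕ, K ≤ k → ‖(NormedSpace.exp B) ^ k‖ ≤ cR ^ k := by
    intro k hk
    have hk1 : 1 ≤ k := le_trans (le_max_right _ _) hk
    have hkne : (k : ℝ) ≠ 0 := by positivity
    have h := hK0 k (le_trans (le_max_left _ _) hk)
    have hx : (‖(NormedSpace.exp B) ^ k‖₊ : ℝ≥0∞) ≤ (c : ℝ≥0∞) ^ (k : ℕ) := by
      calc (‖(NormedSpace.exp B) ^ k‖₊ : ℝ≥0∞)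
          = ((‖(NormedSpace.exp B) ^ k‖₊ : ℝ≥0∞) ^ (1 / (k : ℝ))) ^ (k : ℝ) := by
            rw [← ENNReal.rpow_mul, one_div, inv_mul_cancel₀ hkne, ENNReal.rpow_one]
        _ ≤ (c : ℝ≥0∞) ^ (k : ℝ) := ENNReal.rpow_le_rpow h.le (Nat.cast_nonneg k)
        _ = (c : ℝ≥0∞) ^ (k : ℕ) := ENNReal.rpow_natCast _ k
    rw [← ENNReal.coe_pow, ENNReal.coe_le_coe] at hx
    calc ‖(NormedSpace.exp B) ^ k‖ = ((‖(NormedSpace.exp B) ^ k‖₊ : ℝ≥0) : ℝ) := rfl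
      _ ≤ ((c ^ k : ℝ≥0) : ℝ) := by exact_mod_cast hx
      _ = cR ^ k := by push_cast; rfl
  -- bound on compact [0, K+1]
  obtain ⟨M0, hM0⟩ := (isCompact_Icc (a := (0:ℝ)) (b := (K:ℝ)+1)).exists_bound_of_continuousOn
    ((exp_continuous.comp (Complex.continuous_ofReal.smul continuous_const)).continuousOn
      (f := fun t : ℝ => NormedSpace.exp ((t : ℂ) • B)))
  set M : ℝ := max M0 0 with hM
  have hMn : 0 ≤ M := le_max_right _ _
  have hMb : ∀ s : ℝ, s ∈ Icc (0:ℝ) ((K:ℝ)+1) → ‖NormedSpace.exp ((s : ℂ) • B)‖ ≤ M :=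
    fun s hs => le_trans (hM0 s hs) (le_max_left _ _)
  -- main uniform bound
  have main : ∀ t : ℝ, 0 ≤ t → ‖NormedSpace.exp ((t : ℂ) • B)‖ ≤ M * cR ^ (t - ((K : ℝ) + 1)) := by
    intro t ht
    set k : ℕ := ⌊t⌋₊ with hk
    have hkt : (k : ℝ) ≤ t := Nat.floor_le ht
    have htk : t < (k : ℝ) + 1 := Nat.lt_floor_add_one t
    by_cases hkK : K ≤ k
    · -- split
      have hsplit : NormedSpace.exp ((t : ℂ) • B)
          = NormedSpace.exp (((t - (k : ℝ) : ℝ) : ℂ) • B) * (NormedSpace.exp B) ^ k := by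
        have hcomm : Commute ((((t - (k : ℝ) : ℝ)) : ℂ) • B) ((((k : ℝ)) : ℂ) • B) :=
          ((Commute.refl B).smul_left _).smul_right _
        have hadd : ((t : ℂ)) • B = (((t - (k : ℝ) : ℝ)) : ℂ) • B + (((k : ℝ)) : ℂ) • B := by
          rw [← add_smul]
          norm_num
        rw [hadd, exp_add_of_commute hcomm]
        congr 1
        have : ((((k : ℝ)) : ℂ)) • B = (k : ℕ) • B := by
          push_cast
          rw [Nat.cast_smul_eq_nsmul]
        rw [this]
        exact Matrix.exp_nsmul k B
      rw [hsplit]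
      have h1 : ‖NormedSpace.exp (((t - (k : ℝ) : ℝ) : ℂ) • B)‖ ≤ M := by
        have hK0' : (0 : ℝ) ≤ (K : ℝ) := Nat.cast_nonneg K
        exact hMb _ ⟨by linarith, by linarith⟩
      calc ‖NormedSpace.exp (((t - (k : ℝ) : ℝ) : ℂ) • B) * (NormedSpace.exp B) ^ k‖
          ≤ ‖NormedSpace.exp (((t - (k : ℝ) : ℝ) : ℂ) • B)‖ * ‖(NormedSpace.exp B) ^ k‖ := norm_mul_le _ _
        _ ≤ M * (cR ^ k) := mul_le_mul h1 (hpow k hkK) (norm_nonneg _) hMn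
        _ ≤ M * cR ^ (t - ((K : ℝ) + 1)) := by
            refine mul_le_mul_of_nonneg_left ?_ hMn
            rw [← Real.rpow_natCast cR k]
            exact Real.rpow_le_rpow_of_exponent_ge c0R c1R.le (by linarith)
    · -- small t
      push_neg at hkK
      have htK : t ≤ (K : ℝ) + 1 := by
        have : (k : ℝ) + 1 ≤ (K : ℝ) + 1 := by
          have : (k : ℝ) ≤ (K : ℝ) := by exact_mod_cast hkK.le
          linarith
        linarith
      have h1 : ‖NormedSpace.exp ((t : ℂ) • B)‖ ≤ M := hMb t ⟨ht, htK⟩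
      have h2 : (1 : ℝ) ≤ cR ^ (t - ((K : ℝ) + 1)) :=
        Real.one_le_rpow_of_pos_of_le_one_of_nonpos c0R c1R.le (by linarith)
      calc ‖NormedSpace.exp ((t : ℂ) • B)‖ ≤ M := h1
        _ = M * 1 := (mul_one M).symm
        _ ≤ M * cR ^ (t - ((K : ℝ) + 1)) := mul_le_mul_of_nonneg_left h2 hMn
  -- convert to exponential form
  have hδ : 0 < -Real.log cR := by
    have := Real.log_neg c0R c1R
    linarith
  refine ⟨M * cR ^ (-((K : ℝ) + 1)), -Real.log cR, hδ, fun t ht => ?_⟩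
  have := main t ht
  have hre : cR ^ (t - ((K : ℝ) + 1)) = cR ^ (-((K : ℝ) + 1)) * Real.exp (-(-Real.log cR) * t) := by
    rw [show t - ((K : ℝ) + 1) = (-((K : ℝ) + 1)) + t by ring, Real.rpow_add c0R]
    congr 1
    rw [Real.rpow_def_of_pos c0R]
    ring_nf
  rw [hre] at this
  linarith [this]


/-- entry evaluation as a CLM -/
def entryCLM (i j : Fin N) : Matrix (Fin N) (Fin N) ℂ →L[ℂ] ℂ :=
  LinearMap.toContinuousLinearMap
    { toFun := fun M => M i j
      map_add' := fun _ _ => rfl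
      map_smul' := fun _ _ => rfl }

/-- right multiplication as a CLM -/
def mulRightCLM (B : Matrix (Fin N) (Fin N) ℂ) :
    Matrix (Fin N) (Fin N) ℂ →L[ℂ] Matrix (Fin N) (Fin N) ℂ :=
  LinearMap.toContinuousLinearMap
    { toFun := fun M => M * B
      map_add' := fun M M' => add_mul M M' B
      map_smul' := fun c M => smul_mul_assoc c M B }

lemma key_facts (B : Matrix (Fin N) (Fin N) ℂ)
    (hdecay : ∃ C δ : ℝ, 0 < δ ∧ ∀ t : ℝ, 0 ≤ t →
      ‖NormedSpace.exp ((t : ℂ) • B)‖ ≤ C * Real.exp (-δ * t)) :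
    IntegrableOn (fun t : ℝ => NormedSpace.exp ((t : ℂ) • B)) (Set.Ici 0) volume ∧
    (∫ t in Set.Ici (0 : ℝ), NormedSpace.exp ((t : ℂ) • B)) * (-B) = 1 := by
  obtain ⟨C, δ, hδ, hbound⟩ := hdecay
  set F : ℝ → Matrix (Fin N) (Fin N) ℂ := fun t => NormedSpace.exp ((t : ℂ) • B) with hF
  have hFcont : Continuous F :=
    exp_continuous.comp (Complex.continuous_ofReal.smul continuous_const)
  have hFint : IntegrableOn F (Set.Ici 0) volume := by
    rw [integrableOn_Ici_iff_integrableOn_Ioi]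
    refine Integrable.mono' ((exp_neg_integrableOn_Ioi 0 hδ).const_mul C)
      hFcont.aestronglyMeasurable.restrict ?_
    refine (ae_restrict_iff' measurableSet_Ioi).mpr (Filter.Eventually.of_forall fun t ht => ?_)
    have : -δ * t = -(δ * t) := by ring
    rw [this]
    have h := hbound t (le_of_lt ht)
    rw [show -δ * t = -(δ * t) by ring] at h
    exact h
  refine ⟨hFint, ?_⟩
  set J : Matrix (Fin N) (Fin N) ℂ := ∫ t in Set.Ici (0 : ℝ), F t with hJ
  -- derivative
  have hderiv : ∀ t : ℝ, HasDerivAt F (F t * B) t := by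
    intro t
    have h := hasDerivAt_exp_smul_const (𝕂 := ℂ) B (t : ℂ)
    have h2 := h.scomp t Complex.ofRealCLM.hasDerivAt
    simp only [Complex.ofRealCLM_apply, Complex.ofReal_one, one_smul] at h2
    exact h2
  have hF0 : F 0 = 1 := by
    simp only [hF, Complex.ofReal_zero, zero_smul, NormedSpace.exp_zero]
  have hFTC : ∀ T : ℝ, (∫ t in (0:ℝ)..T, F t * B) = F T - 1 := by
    intro T
    rw [← hF0]
    exact intervalIntegral.integral_eq_sub_of_hasDerivAt (fun t _ => hderiv t)
      ((hFcont.mul continuous_const).intervalIntegrable _ _)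
  -- limits
  have htendF : Tendsto F atTop (𝓝 0) := by
    have hexp : Tendsto (fun T : ℝ => C * Real.exp (-δ * T)) atTop (𝓝 0) := by
      have h0 : Tendsto (fun T : ℝ => Real.exp (-δ * T)) atTop (𝓝 0) := by
        have h1 : Tendsto (fun T : ℝ => δ * T) atTop atTop :=
          (tendsto_const_mul_atTop_of_pos hδ).mpr tendsto_id
        have h2 : Tendsto (fun T : ℝ => Real.exp (-(δ * T))) atTop (𝓝 0) :=
          Real.tendsto_exp_neg_atTop_nhds_zero.comp h1
        simpa [neg_mul] using h2
      simpa using h0.const_mul C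
    exact squeeze_zero_norm' ((eventually_ge_atTop (0:ℝ)).mono fun T hT => hbound T hT) hexp
  have h1 : Tendsto (fun T : ℝ => (∫ t in (0:ℝ)..T, F t) * B) atTop (𝓝 (J * B)) := by
    have hI : Tendsto (fun T : ℝ => ∫ t in (0:ℝ)..T, F t) atTop (𝓝 J) := by
      rw [hJ, integral_Ici_eq_integral_Ioi]
      exact intervalIntegral_tendsto_integral_Ioi 0
        ((integrableOn_Ici_iff_integrableOn_Ioi).mp hFint) tendsto_id
    exact (continuous_id.mul continuous_const).continuousAt.tendsto.comp hI
  have h2 : Tendsto (fun T : ℝ => F T - 1) atTop (𝓝 (0 - 1)) :=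
    htendF.sub tendsto_const_nhds
  have heq : ∀ᶠ T in atTop, (∫ t in (0:ℝ)..T, F t) * B = F T - 1 := by
    refine Filter.Eventually.of_forall fun T => ?_
    rw [← hFTC T]
    have := (mulRightCLM B).intervalIntegral_comp_comm
      (hFcont.intervalIntegrable (μ := volume) 0 T)
    exact this.symm
  have hJB : J * B = 0 - 1 := tendsto_nhds_unique (h1.congr' heq) h2
  rw [zero_sub] at hJB
  rw [Matrix.mul_neg, hJB, neg_neg]

end Aux
end St17



/-- If every eigenvalue `λ` of `A ∈ ℝ^{n×n}` satisfies `Re λ < 0` or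
`λ = 0`, then for every `z` with `Re z > 0` the matrix `z Iₙ − A` is invertible,
`t ↦ exp(t(A − z Iₙ))` is integrable on `[0,∞)`, and
`(z Iₙ − A)⁻¹ = ∫_0^∞ exp(t(A − z Iₙ)) dt = ∫_0^∞ e^{−zt} exp(tA) dt`. -/
theorem statement17 {n : ℕ} (A : Matrix (Fin n) (Fin n) ℝ)
    (hA : ∀ lam : ℂ,
      (lam • (1 : Matrix (Fin n) (Fin n) ℂ) - A.map Complex.ofReal).det = 0 →
        lam.re < 0 ∨ lam = 0)
    (z : ℂ) (hz : 0 < z.re) :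
    IsUnit (z • (1 : Matrix (Fin n) (Fin n) ℂ) - A.map Complex.ofReal) ∧
    (∀ i j, IntegrableOn
      (fun t : ℝ => NormedSpace.exp
        ((t : ℂ) • (A.map Complex.ofReal - z • (1 : Matrix (Fin n) (Fin n) ℂ))) i j)
      (Set.Ici 0) volume) ∧
    (∀ i j, (z • (1 : Matrix (Fin n) (Fin n) ℂ) - A.map Complex.ofReal)⁻¹ i j =
      ∫ t in Set.Ici (0 : ℝ), NormedSpace.exp
        ((t : ℂ) • (A.map Complex.ofReal - z • (1 : Matrix (Fin n) (Fin n) ℂ))) i j) ∧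
    (∀ i j, (∫ t in Set.Ici (0 : ℝ), NormedSpace.exp
        ((t : ℂ) • (A.map Complex.ofReal - z • (1 : Matrix (Fin n) (Fin n) ℂ))) i j) =
      ∫ t in Set.Ici (0 : ℝ),
        Complex.exp (-z * t) * NormedSpace.exp ((t : ℂ) • A.map Complex.ofReal) i j) := by
  classical
  rcases Nat.eq_zero_or_pos n with hn | hn
  · subst hn
    haveI : Subsingleton (Matrix (Fin 0) (Fin 0) ℂ) :=
      ⟨fun a b => by ext i j; exact i.elim0⟩
    exact ⟨isUnit_of_subsingleton _, fun i => i.elim0, fun i => i.elim0, fun i => i.elim0⟩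
  letI : SeminormedRing (Matrix (Fin n) (Fin n) ℂ) := Matrix.linftyOpSemiNormedRing
  letI : NormedRing (Matrix (Fin n) (Fin n) ℂ) := Matrix.linftyOpNormedRing
  letI : NormedAlgebra ℂ (Matrix (Fin n) (Fin n) ℂ) := Matrix.linftyOpNormedAlgebra
  set A' : Matrix (Fin n) (Fin n) ℂ := A.map Complex.ofReal with hA'
  set B : Matrix (Fin n) (Fin n) ℂ := A' - z • 1 with hB
  have hBspec : ∀ lam ∈ spectrum ℂ B, lam.re < 0 := by
    intro lam hl
    rw [St17.mem_spectrum_iff_det] at hl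
    have hrew : lam • (1 : Matrix (Fin n) (Fin n) ℂ) - B
        = (lam + z) • (1 : Matrix (Fin n) (Fin n) ℂ) - A' := by
      rw [hB, add_smul]; abel
    rw [hrew] at hl
    rcases hA (lam + z) hl with h | h
    · simp only [Complex.add_re] at h; linarith
    · have hlz : lam = -z := eq_neg_of_add_eq_zero_left h
      rw [hlz, Complex.neg_re]; linarith
  obtain ⟨hint, hkey⟩ := St17.key_facts B
    (St17.norm_exp_decay hn B hBspec (St17.spectrum_exp hn B))
  have hnegB : z • (1 : Matrix (Fin n) (Fin n) ℂ) - A' = -B := by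
    rw [hB, neg_sub]
  have hmul : (∫ t in Set.Ici (0:ℝ), NormedSpace.exp ((t : ℂ) • B)) *
      (z • (1 : Matrix (Fin n) (Fin n) ℂ) - A') = 1 := by
    rw [hnegB]; exact hkey
  have hmul' := mul_eq_one_comm.mp hmul
  refine ⟨⟨⟨z • (1 : Matrix (Fin n) (Fin n) ℂ) - A', _, hmul', hmul⟩, rfl⟩, fun i j => ?_, fun i j => ?_, fun i j => ?_⟩
  · exact (St17.entryCLM i j).integrable_comp hint
  · rw [Matrix.inv_eq_left_inv hmul]
    exact ((St17.entryCLM i j).integral_comp_comm hint).symm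
  · refine integral_congr_ae (Filter.Eventually.of_forall fun t => ?_)
    have hsum : (t : ℂ) • B = (t : ℂ) • A' + (-z * (t : ℂ)) • (1 : Matrix (Fin n) (Fin n) ℂ) := by
      rw [hB, smul_sub, smul_smul, sub_eq_add_neg, ← neg_smul]
      congr 2
      ring
    have hcomm : Commute ((t : ℂ) • A') ((-z * (t : ℂ)) • (1 : Matrix (Fin n) (Fin n) ℂ)) :=
      (Commute.one_right ((t : ℂ) • A')).smul_right _
    have hscal : NormedSpace.exp ((-z * (t : ℂ)) • (1 : Matrix (Fin n) (Fin n) ℂ))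
        = Complex.exp (-z * (t : ℂ)) • (1 : Matrix (Fin n) (Fin n) ℂ) := by
      have hm := NormedSpace.map_exp (algebraMap ℂ (Matrix (Fin n) (Fin n) ℂ))
        (continuous_algebraMap _ _) (-z * (t : ℂ))
      rw [← Complex.exp_eq_exp_ℂ, Algebra.algebraMap_eq_smul_one, Algebra.algebraMap_eq_smul_one] at hm
      exact hm.symm
    have hpt : NormedSpace.exp ((t : ℂ) • B) i j
        = Complex.exp (-z * (t : ℂ)) * NormedSpace.exp ((t : ℂ) • A') i j := by
      rw [hsum, Matrix.exp_add_of_commute _ _ hcomm, hscal, mul_smul_comm, mul_one]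
      rw [Matrix.smul_apply, smul_eq_mul]
    exact hpt
end
end

section
/- Suppose there exists ε > 0 such that det Q(z) ≠ 0 for every z ∈ ℂ with Re(z) ≥ −ε. Then: (1) the matrix polynomial z ↦ Q(z)(z·I_n − η₀) − P(z) has degree at most p − 2; and (2) sup_{x > −ε} ∫_ℝ ‖(x+iy)·I_n − η₀ − Q(x+iy)^{−1}P(x+iy)‖² dy < ∞. -/
open MeasureTheory Matrix Complex Set

noncomputable section

/-- Euclidean norm on `Fin n → ℝ`. -/
def euclNorm {n : ℕ} (v : Fin n → ℝ) : ℝ := Real.sqrt (∑ i, v i ^ 2)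

/-- Frobenius norm of a real square matrix. -/
def frobR {n : ℕ} (A : Matrix (Fin n) (Fin n) ℝ) : ℝ := Real.sqrt (∑ i, ∑ j, A i j ^ 2)

/-- Frobenius norm of a complex square matrix. -/
def frobC {n : ℕ} (A : Matrix (Fin n) (Fin n) ℂ) : ℝ :=
  Real.sqrt (∑ i, ∑ j, ‖A i j‖ ^ 2)

/-- Integral of a real function over `s` against a finite signed measure
(via the Jordan decomposition). -/
def sIntOn (μ : SignedMeasure ℝ) (s : Set ℝ) (f : ℝ → ℝ) : ℝ :=
  (∫ t in s, f t ∂μ.toJordanDecomposition.posPart) -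
    ∫ t in s, f t ∂μ.toJordanDecomposition.negPart

/-- Integral of a complex function over `s` against a finite signed measure. -/
def sIntOnC (μ : SignedMeasure ℝ) (s : Set ℝ) (f : ℝ → ℂ) : ℂ :=
  (∫ t in s, f t ∂μ.toJordanDecomposition.posPart) -
    ∫ t in s, f t ∂μ.toJordanDecomposition.negPart

/-- The signed matrix measure `η` is supported on `[0,∞)`. -/
def SuppNonneg {n : ℕ} (η : Matrix (Fin n) (Fin n) (SignedMeasure ℝ)) : Prop :=
  ∀ i j, (η i j).totalVariation (Set.Iio 0) = 0

/-- `η` has a `δ`-exponential moment: `∫ e^{δ t} |η_ij|(dt) < ∞`. -/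
def ExpMoment {n : ℕ} (δ : ℝ) (η : Matrix (Fin n) (Fin n) (SignedMeasure ℝ)) : Prop :=
  ∀ i j, (∫⁻ t, ENNReal.ofReal (Real.exp (δ * t)) ∂(η i j).totalVariation) < ⊤

/-- The Laplace transform `L[η](z)`, an `n × n` complex matrix. -/
def lapM {n : ℕ} (η : Matrix (Fin n) (Fin n) (SignedMeasure ℝ)) (z : ℂ) :
    Matrix (Fin n) (Fin n) ℂ :=
  Matrix.of fun i j => sIntOnC (η i j) (Set.Ici 0) fun t => Complex.exp (-z * t)

/-- `h_η(z) = z Iₙ − L[η](z)`. -/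
def hEta {n : ℕ} (η : Matrix (Fin n) (Fin n) (SignedMeasure ℝ)) (z : ℂ) :
    Matrix (Fin n) (Fin n) ℂ :=
  z • (1 : Matrix (Fin n) (Fin n) ℂ) - lapM η z

/-- `Π₀ = η([0,∞))`. -/
def Pi0 {n : ℕ} (η : Matrix (Fin n) (Fin n) (SignedMeasure ℝ)) : Matrix (Fin n) (Fin n) ℝ :=
  Matrix.of fun i j => η i j (Set.Ici 0)

/-- `π(t) = η([0,t]) − η([0,∞))`. -/
def piFun {n : ℕ} (η : Matrix (Fin n) (Fin n) (SignedMeasure ℝ)) (t : ℝ) :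
    Matrix (Fin n) (Fin n) ℝ :=
  Matrix.of fun i j => η i j (Set.Icc 0 t) - η i j (Set.Ici 0)

/-- `Π([0,∞)) = ∫_0^∞ π(t) dt`. -/
def PiInf {n : ℕ} (η : Matrix (Fin n) (Fin n) (SignedMeasure ℝ)) : Matrix (Fin n) (Fin n) ℝ :=
  Matrix.of fun i j => ∫ t in Set.Ioi (0 : ℝ), piFun η t i j

/-- Condition (C): `det h_η(z) ≠ 0` on `ℍ_δ \ {0}`, and `G` is an analytic extension of
`z ↦ z • h_η(z)⁻¹` to all of `ℍ_δ`. -/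
def CondC {n : ℕ} (δ : ℝ) (η : Matrix (Fin n) (Fin n) (SignedMeasure ℝ))
    (G : ℂ → Matrix (Fin n) (Fin n) ℂ) : Prop :=
  (∀ z : ℂ, -δ < z.re → z ≠ 0 → (hEta η z).det ≠ 0) ∧
  (∀ i j, DifferentiableOn ℂ (fun z => G z i j) {z : ℂ | -δ < z.re}) ∧
  ∀ z : ℂ, -δ < z.re → z ≠ 0 → G z = z • (hEta η z)⁻¹

/-- The process `Z` has stationary increments (equality of all finite-dimensional
distributions of the increment processes). -/
def StatInc {n : ℕ} {Ω : Type} [MeasurableSpace Ω] (P : Measure Ω)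
    (Z : ℝ → Ω → Fin n → ℝ) : Prop :=
  ∀ (h : ℝ) (k : ℕ) (ts : Fin k → ℝ),
    Measure.map (fun ω (m : Fin k) => Z (ts m + h) ω - Z h ω) P =
      Measure.map (fun ω (m : Fin k) => Z (ts m) ω - Z 0 ω) P

/-- The pair `(X, Z)` has stationary increments. -/
def PairStatInc {n : ℕ} {Ω : Type} [MeasurableSpace Ω] (P : Measure Ω)
    (X Z : ℝ → Ω → Fin n → ℝ) : Prop :=
  ∀ (h : ℝ) (k : ℕ) (ts : Fin k → ℝ),
    Measure.map (fun ω (m : Fin k) =>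
        (X (ts m + h) ω - X h ω, Z (ts m + h) ω - Z h ω)) P =
      Measure.map (fun ω (m : Fin k) => (X (ts m) ω - X 0 ω, Z (ts m) ω - Z 0 ω)) P

/-- The driving noise: measurable, `Z_0 = 0`, stationary increments,
square-integrable marginals. -/
def GoodNoise {n : ℕ} {Ω : Type} [MeasurableSpace Ω] (P : Measure Ω)
    (Z : ℝ → Ω → Fin n → ℝ) : Prop :=
  Measurable (Function.uncurry Z) ∧ (∀ ω, Z 0 ω = 0) ∧ StatInc P Z ∧
    ∀ t, Integrable (fun ω => euclNorm (Z t ω) ^ 2) P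

/-- `X` is a solution of the MSDDE `dX_t = η ∗ X(t) dt + dZ_t`. -/
def IsMSDDESolution {n : ℕ} {Ω : Type} [MeasurableSpace Ω] (P : Measure Ω)
    (η : Matrix (Fin n) (Fin n) (SignedMeasure ℝ)) (Z X : ℝ → Ω → Fin n → ℝ) : Prop :=
  Measurable (Function.uncurry X) ∧
  (∀ t, Integrable (fun ω => euclNorm (X t ω) ^ 2) P) ∧
  PairStatInc P X Z ∧
  ∀ s t : ℝ, s < t → ∀ i, ∀ᵐ ω ∂P,
    X t ω i - X s ω i =
      (∑ j, ∫ u in s..t, sIntOn (η i j) (Set.Ici 0) fun v => X (u - v) ω j) +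
        (Z t ω i - Z s ω i)

/-- Specification of the kernel `f` from the Granger-type representation theorem:
vanishing on negatives, exponentially decaying, with Laplace transform
`Iₙ − z h_η(z)⁻¹` (via the analytic extension `G`). -/
def FSpec {n : ℕ} (δ : ℝ) (G : ℂ → Matrix (Fin n) (Fin n) ℂ)
    (f : ℝ → Matrix (Fin n) (Fin n) ℝ) : Prop :=
  (∀ i j, Measurable fun t => f t i j) ∧ (∀ t < (0 : ℝ), f t = 0) ∧
  (∀ ε, 0 < ε → ε < δ → ∃ M, ∀ t, 0 ≤ t → Real.exp (ε * t) * frobR (f t) ≤ M) ∧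
  ∀ z : ℂ, -δ < z.re → ∀ i j,
    (∫ t in Set.Ici (0 : ℝ), Complex.exp (-z * t) * (f t i j : ℂ)) =
      ((1 : Matrix (Fin n) (Fin n) ℂ) - G z) i j

/-- `f_r = 1_{[0,∞)}(· − r) − 1_{[0,∞)}`. -/
def frFun (r x : ℝ) : ℝ :=
  Set.indicator (Set.Ici r) (fun _ => (1 : ℝ)) x - Set.indicator (Set.Ici 0) (fun _ => (1 : ℝ)) x

/-- `I` is an integration map (regular integrator) for the one-dimensional noise `Zi`. -/
def IsRegIntegrator {Ω : Type} [MeasurableSpace Ω] (P : Measure Ω) (Zi : ℝ → Ω → ℝ)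
    (I : (ℝ → ℝ) → Ω → ℝ) : Prop :=
  (∀ f : ℝ → ℝ, Integrable f volume → MemLp f 2 volume → Integrable (I f) P) ∧
  (∀ f g : ℝ → ℝ, Integrable f volume → MemLp f 2 volume → Integrable g volume →
    MemLp g 2 volume → I (f + g) =ᵐ[P] I f + I g) ∧
  (∀ (c : ℝ) (f : ℝ → ℝ), Integrable f volume → MemLp f 2 volume →
    I (c • f) =ᵐ[P] c • I f) ∧
  (∀ s t : ℝ, s < t →
    I (Set.indicator (Set.Ioc s t) fun _ => (1 : ℝ)) =ᵐ[P] fun ω => Zi t ω - Zi s ω) ∧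
  (∀ (μ : Measure ℝ) [IsFiniteMeasure μ], Integrable (fun r => |r|) μ → ∀ t : ℝ,
    ∀ᵐ ω ∂P, Integrable (fun r => I (fun s => frFun r (t - s)) ω) μ ∧
      I (fun s => ∫ r, frFun r (t - s) ∂μ) ω = ∫ r, I (fun s => frFun r (t - s)) ω ∂μ)

/-- The matrix polynomial `z ↦ Σ_{k=0}^{p} z^{p−k} • c_k` (complexified), where
`c 0` is the leading coefficient. -/
def polyMat {n : ℕ} (p : ℕ) (c : ℕ → Matrix (Fin n) (Fin n) ℝ) (z : ℂ) :
    Matrix (Fin n) (Fin n) ℂ :=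
  ∑ k ∈ Finset.range (p + 1), z ^ (p - k) • (c k).map Complex.ofReal

def Complex.abs : AbsoluteValue ℂ ℝ := NormedField.toAbsoluteValue ℂ

lemma Complex.norm_eq_abs (z : ℂ) : ‖z‖ = Complex.abs z := rfl

lemma Complex.sq_abs (z : ℂ) : Complex.abs z ^ 2 = Complex.normSq z := Complex.sq_norm z

lemma Complex.continuous_abs : Continuous Complex.abs := continuous_norm

section Statement18Aux

open Finset

attribute [local instance] Matrix.frobeniusSeminormedAddCommGroup
  Matrix.frobeniusNormedAddCommGroup Matrix.frobeniusNormedSpace Matrix.frobeniusIsBoundedSMul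

namespace S18

variable {n : ℕ}

variable {n : ℕ}

lemma frobC_eq_norm (A : Matrix (Fin n) (Fin n) ℂ) : frobC A = ‖A‖ := by
  rw [Matrix.frobenius_norm_def, frobC, Real.sqrt_eq_rpow]
  congr 1
  refine Finset.sum_congr rfl fun i _ => Finset.sum_congr rfl fun j _ => ?_
  rw [Real.rpow_two, Complex.norm_eq_abs]

lemma entry_le_norm (A : Matrix (Fin n) (Fin n) ℂ) (i j : Fin n) :
    Complex.abs (A i j) ≤ ‖A‖ := by
  rw [← frobC_eq_norm, frobC]
  rw [show Complex.abs (A i j) = Real.sqrt (Complex.abs (A i j) ^ 2) from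
    (Real.sqrt_sq (AbsoluteValue.nonneg _ _)).symm]
  apply Real.sqrt_le_sqrt
  calc Complex.abs (A i j) ^ 2 ≤ ∑ j', Complex.abs (A i j') ^ 2 :=
        Finset.single_le_sum (f := fun j' => Complex.abs (A i j') ^ 2)
          (fun j' _ => sq_nonneg _) (Finset.mem_univ j)
    _ ≤ ∑ i', ∑ j', Complex.abs (A i' j') ^ 2 :=
        Finset.single_le_sum (f := fun i' => ∑ j', Complex.abs (A i' j') ^ 2)
          (fun i' _ => Finset.sum_nonneg fun j' _ => sq_nonneg _) (Finset.mem_univ i)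

lemma norm_le_of_entry_le (A : Matrix (Fin n) (Fin n) ℂ) {c : ℝ} (hc : 0 ≤ c)
    (h : ∀ i j, Complex.abs (A i j) ≤ c) : ‖A‖ ≤ n * c := by
  rw [← frobC_eq_norm, frobC]
  rw [show (n : ℝ) * c = Real.sqrt ((n * c) ^ 2) from (Real.sqrt_sq (by positivity)).symm]
  apply Real.sqrt_le_sqrt
  calc ∑ i, ∑ j, Complex.abs (A i j) ^ 2
      ≤ ∑ _i : Fin n, ∑ _j : Fin n, c ^ 2 := by
        refine Finset.sum_le_sum fun i _ => Finset.sum_le_sum fun j _ => ?_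
        exact pow_le_pow_left₀ (AbsoluteValue.nonneg _ _) (h i j) 2
    _ = (n : ℝ) * ((n : ℝ) * c ^ 2) := by simp [Finset.sum_const, mul_assoc]
    _ ≤ (n * c) ^ 2 := by nlinarith [sq_nonneg c, Nat.cast_nonneg (α := ℝ) n]

lemma abs_det_le (M : Matrix (Fin n) (Fin n) ℂ) (b : Fin n → ℝ)
    (h : ∀ i j, Complex.abs (M i j) ≤ b i) :
    Complex.abs M.det ≤ (Nat.factorial n : ℝ) * ∏ i, b i := by
  rw [Matrix.det_apply']
  calc Complex.abs (∑ σ : Equiv.Perm (Fin n), Equiv.Perm.sign σ * ∏ i, M (σ i) i)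
      ≤ ∑ σ : Equiv.Perm (Fin n), Complex.abs (Equiv.Perm.sign σ * ∏ i, M (σ i) i) := by
        exact AbsoluteValue.sum_le _ _ _
    _ ≤ ∑ _σ : Equiv.Perm (Fin n), ∏ i, b i := by
        refine Finset.sum_le_sum fun σ _ => ?_
        rw [_root_.map_mul, map_prod]
        have hs : Complex.abs ((Equiv.Perm.sign σ : ℤ) : ℂ) = 1 := by
          rcases Int.units_eq_one_or (Equiv.Perm.sign σ) with hσ | hσ <;> rw [hσ] <;> simp
        rw [hs, one_mul]
        calc ∏ i, Complex.abs (M (σ i) i) ≤ ∏ i, b (σ i) :=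
              Finset.prod_le_prod (fun i _ => AbsoluteValue.nonneg _ _) fun i _ => h (σ i) i
          _ = ∏ i, b i := Equiv.prod_comp σ b
    _ = (Nat.factorial n : ℝ) * ∏ i, b i := by
        rw [Finset.sum_const, Finset.card_univ, Fintype.card_perm, Fintype.card_fin,
          nsmul_eq_mul]

lemma abs_adjugate_le (A : Matrix (Fin n) (Fin n) ℂ) {c : ℝ} (hc : 1 ≤ c)
    (h : ∀ i j, Complex.abs (A i j) ≤ c) (i j : Fin n) :
    Complex.abs (A.adjugate i j) ≤ (Nat.factorial n : ℝ) * c ^ (n - 1) := by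
  rw [Matrix.adjugate_apply]
  have := abs_det_le (A.updateRow j (Pi.single i 1)) (fun r => if r = j then 1 else c) ?_
  · refine this.trans (mul_le_mul_of_nonneg_left ?_ (Nat.cast_nonneg _))
    have hj : (Finset.univ : Finset (Fin n)).prod (fun r => if r = j then 1 else c)
        = ∏ r ∈ Finset.univ.erase j, (if r = j then 1 else c) := by
      rw [← Finset.mul_prod_erase Finset.univ _ (Finset.mem_univ j)]
      simp
    rw [hj]
    calc ∏ r ∈ Finset.univ.erase j, (if r = j then 1 else c)
        = ∏ _r ∈ Finset.univ.erase j, c :=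
          Finset.prod_congr rfl fun r hr => by
            simp [Finset.ne_of_mem_erase hr]
      _ = c ^ (n - 1) := by
          rw [Finset.prod_const, Finset.card_erase_of_mem (Finset.mem_univ j),
            Finset.card_univ, Fintype.card_fin]
      _ ≤ c ^ (n - 1) := le_refl _
  · intro r s
    rw [Matrix.updateRow_apply]
    split_ifs with hr
    · rcases eq_or_ne s i with hs | hs
      · subst hs; rw [Pi.single_eq_same]; simp [hr]
      · simp [Pi.single_eq_of_ne hs, hr, zero_le_one.trans hc, le_refl (1:ℝ)]
    · simpa [hr] using h r s

variable {n : ℕ}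

lemma polyMat_reflect (q : ℕ) (c : ℕ → Matrix (Fin n) (Fin n) ℝ) (z : ℂ) :
    polyMat q c z = ∑ j ∈ Finset.range (q + 1), z ^ j • (c (q - j)).map Complex.ofReal := by
  rw [polyMat, ← Finset.sum_range_reflect (fun j => z ^ j • (c (q - j)).map Complex.ofReal)]
  refine Finset.sum_congr rfl fun k hk => ?_
  rw [Finset.mem_range, Nat.lt_succ_iff] at hk
  have h1 : q + 1 - 1 - k = q - k := by omega
  have h2 : q - (q - k) = k := Nat.sub_sub_self hk
  rw [h1, h2]

lemma norm_polyMat_le (q : ℕ) (c : ℕ → Matrix (Fin n) (Fin n) ℝ) (z : ℂ)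
    (hz : 1 ≤ Complex.abs z) :
    ‖polyMat q c z‖ ≤
      (∑ k ∈ Finset.range (q + 1), ‖(c k).map Complex.ofReal‖) * Complex.abs z ^ q := by
  rw [polyMat]
  refine (norm_sum_le _ _).trans ?_
  rw [Finset.sum_mul]
  refine Finset.sum_le_sum fun k _ => ?_
  rw [norm_smul, Complex.norm_eq_abs, map_pow]
  calc Complex.abs z ^ (q - k) * ‖(c k).map Complex.ofReal‖
      ≤ Complex.abs z ^ q * ‖(c k).map Complex.ofReal‖ :=
        mul_le_mul_of_nonneg_right (pow_le_pow_right₀ hz (Nat.sub_le q k)) (norm_nonneg _)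
    _ = ‖(c k).map Complex.ofReal‖ * Complex.abs z ^ q := mul_comm _ _

lemma keyD {p : ℕ} (hp : 1 ≤ p) (Pc Qc : ℕ → Matrix (Fin n) (Fin n) ℝ)
    (hP0 : Pc 0 = 1) (hQ0 : Qc 0 = 1) (hQtop : ∀ k, p ≤ k → Qc k = 0) (z : ℂ) :
    polyMat (p - 1) Qc z *
        (z • (1 : Matrix (Fin n) (Fin n) ℂ) - ((Qc 1 - Pc 1).map Complex.ofReal)) -
      polyMat p Pc z =
    ∑ k ∈ Finset.range (p - 1), z ^ k •
      ((Qc (p - k)).map Complex.ofReal - (Pc (p - k)).map Complex.ofReal -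
        ((Qc (p - 1 - k)).map Complex.ofReal) * ((Qc 1 - Pc 1).map Complex.ofReal)) := by
  set η : Matrix (Fin n) (Fin n) ℂ := (Qc 1 - Pc 1).map Complex.ofReal with hη
  have hQm : polyMat (p - 1) Qc z
      = ∑ j ∈ Finset.range p, z ^ j • (Qc (p - 1 - j)).map Complex.ofReal := by
    have := polyMat_reflect (p - 1) Qc z
    rwa [Nat.sub_add_cancel hp] at this
  have hPm : polyMat p Pc z = ∑ j ∈ Finset.range (p + 1), z ^ j • (Pc (p - j)).map Complex.ofReal :=
    polyMat_reflect p Pc z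
  have h1 : z • polyMat (p - 1) Qc z
      = ∑ j ∈ Finset.range (p + 1), z ^ j • (Qc (p - j)).map Complex.ofReal := by
    rw [Finset.sum_range_succ' (fun j => z ^ j • (Qc (p - j)).map Complex.ofReal) p]
    have hQp : (Qc (p - 0)).map Complex.ofReal = 0 := by
      rw [Nat.sub_zero, hQtop p le_rfl]
      ext i j; simp
    rw [hQp, smul_zero, add_zero, hQm, Finset.smul_sum]
    refine Finset.sum_congr rfl fun j hj => ?_
    rw [smul_smul, ← pow_succ']
    have e : p - 1 - j = p - (j + 1) := by omega
    rw [e]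
  have h2 : polyMat (p - 1) Qc z * η
      = ∑ j ∈ Finset.range p, z ^ j • ((Qc (p - 1 - j)).map Complex.ofReal * η) := by
    rw [hQm, Finset.sum_mul]
    exact Finset.sum_congr rfl fun j _ => smul_mul_assoc _ _ _
  have hL : polyMat (p - 1) Qc z * (z • (1 : Matrix (Fin n) (Fin n) ℂ) - η)
      = z • polyMat (p - 1) Qc z - polyMat (p - 1) Qc z * η := by
    rw [mul_sub, Matrix.mul_smul, Matrix.mul_one]
  rw [hL, h1, h2, hPm]
  -- peel the top term of the two `range (p+1)` sums
  rw [Finset.sum_range_succ (fun j => z ^ j • (Qc (p - j)).map Complex.ofReal) p,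
    Finset.sum_range_succ (fun j => z ^ j • (Pc (p - j)).map Complex.ofReal) p]
  simp only [Nat.sub_self, hP0, hQ0]
  have hcomb : ∀ (A B C D : Matrix (Fin n) (Fin n) ℂ), A + D - B - (C + D) = A - C - B := by
    intro A B C D; abel
  rw [hcomb]
  have hmerge : (∑ j ∈ Finset.range p, z ^ j • (Qc (p - j)).map Complex.ofReal)
      - (∑ j ∈ Finset.range p, z ^ j • (Pc (p - j)).map Complex.ofReal)
      - (∑ j ∈ Finset.range p, z ^ j • ((Qc (p - 1 - j)).map Complex.ofReal * η))
      = ∑ j ∈ Finset.range p, z ^ j •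
          ((Qc (p - j)).map Complex.ofReal - (Pc (p - j)).map Complex.ofReal -
            (Qc (p - 1 - j)).map Complex.ofReal * η) := by
    rw [← Finset.sum_sub_distrib, ← Finset.sum_sub_distrib]
    exact Finset.sum_congr rfl fun j _ => by rw [smul_sub, smul_sub]
  rw [hmerge]
  -- peel the term j = p - 1
  have hps : p = (p - 1) + 1 := (Nat.succ_pred_eq_of_pos hp).symm
  have hpeel : ∑ j ∈ Finset.range p, z ^ j •
          ((Qc (p - j)).map Complex.ofReal - (Pc (p - j)).map Complex.ofReal -
            (Qc (p - 1 - j)).map Complex.ofReal * η)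
      = (∑ j ∈ Finset.range (p - 1), z ^ j •
          ((Qc (p - j)).map Complex.ofReal - (Pc (p - j)).map Complex.ofReal -
            (Qc (p - 1 - j)).map Complex.ofReal * η))
        + z ^ (p - 1) • ((Qc (p - (p - 1))).map Complex.ofReal
            - (Pc (p - (p - 1))).map Complex.ofReal
            - (Qc (p - 1 - (p - 1))).map Complex.ofReal * η) := by
    conv_lhs => rw [show Finset.range p = Finset.range ((p - 1) + 1) from by
      rw [Nat.sub_add_cancel hp]]
    exact Finset.sum_range_succ (fun j => z ^ j •
      ((Qc (p - j)).map Complex.ofReal - (Pc (p - j)).map Complex.ofReal -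
        (Qc (p - 1 - j)).map Complex.ofReal * η)) (p - 1)
  rw [hpeel]
  have hz0 : (Qc (p - (p - 1))).map Complex.ofReal - (Pc (p - (p - 1))).map Complex.ofReal -
      (Qc (p - 1 - (p - 1))).map Complex.ofReal * η = 0 := by
    have e1 : p - (p - 1) = 1 := by omega
    have e2 : p - 1 - (p - 1) = 0 := by omega
    rw [e1, e2, hQ0]
    have : (1 : Matrix (Fin n) (Fin n) ℝ).map Complex.ofReal = 1 := by
      rw [Matrix.map_one _ Complex.ofReal_zero Complex.ofReal_one]
    rw [this, one_mul, hη]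
    have : ((Qc 1 - Pc 1).map Complex.ofReal)
        = (Qc 1).map Complex.ofReal - (Pc 1).map Complex.ofReal := by
      ext i j; simp [Matrix.map_apply]
    rw [this]; abel
  rw [hz0, smul_zero, add_zero]


variable {n : ℕ}

lemma det_near_one : ∃ δ : ℝ, 0 < δ ∧ ∀ M : Matrix (Fin n) (Fin n) ℂ,
    (∀ i j, Complex.abs ((M - 1) i j) < δ) → Complex.abs (M.det - 1) < 1 / 2 := by
  have hc : ContinuousAt (fun M : Matrix (Fin n) (Fin n) ℂ => M.det) 1 :=
    (Continuous.matrix_det continuous_id).continuousAt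
  have hc' : ContinuousAt (fun M : Fin n → Fin n → ℂ => Matrix.det (Matrix.of M))
      (Matrix.of.symm (1 : Matrix (Fin n) (Fin n) ℂ)) := hc
  have hc2 := Metric.continuousAt_iff.mp hc'
  obtain ⟨δ, hδ, h⟩ := hc2 (1 / 2) (by norm_num)
  refine ⟨δ, hδ, fun M hM => ?_⟩
  have hd : dist (Matrix.of.symm M) (Matrix.of.symm (1 : Matrix (Fin n) (Fin n) ℂ)) < δ := by
    rw [dist_pi_lt_iff hδ]
    intro i
    rw [dist_pi_lt_iff hδ]
    intro j
    have h3 := hM i j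
    rw [Matrix.sub_apply] at h3
    simpa [Complex.dist_eq, Complex.norm_eq_abs] using h3
  have h4 := h hd
  have h5 : Matrix.det (Matrix.of (Matrix.of.symm M)) = M.det := rfl
  have h6 : Matrix.det (Matrix.of (Matrix.of.symm (1 : Matrix (Fin n) (Fin n) ℂ))) = 1 :=
    Matrix.det_one
  rw [h5, h6, Complex.dist_eq] at h4
  exact h4

lemma cont_frobC : Continuous fun A : Matrix (Fin n) (Fin n) ℂ => frobC A := by
  unfold frobC
  apply Real.continuous_sqrt.comp
  apply continuous_finset_sum
  intro i _
  apply continuous_finset_sum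
  intro j _
  exact (Complex.continuous_abs.comp ((continuous_apply j).comp (continuous_apply i))).pow 2

lemma cont_polyMat (q : ℕ) (c : ℕ → Matrix (Fin n) (Fin n) ℝ) :
    Continuous fun z : ℂ => polyMat q c z := by
  unfold polyMat
  apply continuous_finset_sum
  intro k _
  exact (continuous_pow _).smul continuous_const

lemma contF (p : ℕ) (Pc Qc : ℕ → Matrix (Fin n) (Fin n) ℝ) (z₀ : ℂ)
    (h0 : (polyMat (p - 1) Qc z₀).det ≠ 0) :
    ContinuousAt (fun z : ℂ =>
      frobC (z • (1 : Matrix (Fin n) (Fin n) ℂ) - (Qc 1 - Pc 1).map Complex.ofReal -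
        (polyMat (p - 1) Qc z)⁻¹ * polyMat p Pc z)) z₀ := by
  have hFeq : (fun z : ℂ =>
        z • (1 : Matrix (Fin n) (Fin n) ℂ) - (Qc 1 - Pc 1).map Complex.ofReal -
          (polyMat (p - 1) Qc z)⁻¹ * polyMat p Pc z)
      = fun z : ℂ =>
        z • (1 : Matrix (Fin n) (Fin n) ℂ) - (Qc 1 - Pc 1).map Complex.ofReal -
          (((polyMat (p - 1) Qc z).det)⁻¹ • (polyMat (p - 1) Qc z).adjugate) *
            polyMat p Pc z := by
    funext z
    rw [Matrix.inv_def, Ring.inverse_eq_inv']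
  have hQmc : Continuous fun z : ℂ => polyMat (p - 1) Qc z := cont_polyMat _ _
  have hdetc : Continuous fun z : ℂ => (polyMat (p - 1) Qc z).det := hQmc.matrix_det
  have hadjc : Continuous fun z : ℂ => (polyMat (p - 1) Qc z).adjugate := hQmc.matrix_adjugate
  have hinv : ContinuousAt (fun z : ℂ => ((polyMat (p - 1) Qc z).det)⁻¹) z₀ :=
    hdetc.continuousAt.inv₀ h0
  have hmat : ContinuousAt (fun z : ℂ =>
      z • (1 : Matrix (Fin n) (Fin n) ℂ) - (Qc 1 - Pc 1).map Complex.ofReal -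
        (((polyMat (p - 1) Qc z).det)⁻¹ • (polyMat (p - 1) Qc z).adjugate) *
          polyMat p Pc z) z₀ := by
    refine ContinuousAt.sub (ContinuousAt.sub ?_ continuousAt_const) ?_
    · exact (continuous_id.smul continuous_const).continuousAt
    · exact (hinv.smul hadjc.continuousAt).mul (cont_polyMat _ _).continuousAt
  have heq : (fun z : ℂ =>
      frobC (z • (1 : Matrix (Fin n) (Fin n) ℂ) - (Qc 1 - Pc 1).map Complex.ofReal -
        (polyMat (p - 1) Qc z)⁻¹ * polyMat p Pc z))
      = fun z : ℂ =>
      frobC (z • (1 : Matrix (Fin n) (Fin n) ℂ) - (Qc 1 - Pc 1).map Complex.ofReal -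
        (((polyMat (p - 1) Qc z).det)⁻¹ • (polyMat (p - 1) Qc z).adjugate) *
          polyMat p Pc z) := by
    funext z
    rw [Matrix.inv_def, Ring.inverse_eq_inv']
  rw [heq]
  exact (cont_frobC.continuousAt).comp hmat

lemma bigz {p : ℕ} (hp : 1 ≤ p) (hn : 1 ≤ n) (Pc Qc : ℕ → Matrix (Fin n) (Fin n) ℝ)
    (hP0 : Pc 0 = 1) (hQ0 : Qc 0 = 1) (hQtop : ∀ k, p ≤ k → Qc k = 0) :
    ∃ R : ℝ, 1 ≤ R ∧ ∃ C1 : ℝ, 0 ≤ C1 ∧ ∀ z : ℂ, R ≤ Complex.abs z →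
      (polyMat (p - 1) Qc z).det ≠ 0 ∧
      frobC (z • (1 : Matrix (Fin n) (Fin n) ℂ) - (Qc 1 - Pc 1).map Complex.ofReal -
        (polyMat (p - 1) Qc z)⁻¹ * polyMat p Pc z) * Complex.abs z ≤ C1 := by
  classical
  obtain ⟨δ, hδ, hdetcont⟩ := det_near_one (n := n)
  set η : Matrix (Fin n) (Fin n) ℂ := (Qc 1 - Pc 1).map Complex.ofReal with hηdef
  set CD : ℝ := ∑ k ∈ Finset.range (p - 1),
    ‖(Qc (p - k)).map Complex.ofReal - (Pc (p - k)).map Complex.ofReal -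
      ((Qc (p - 1 - k)).map Complex.ofReal) * η‖ with hCDdef
  have hCD0 : 0 ≤ CD := Finset.sum_nonneg fun _ _ => norm_nonneg _
  set CQ : ℝ := max 1 (∑ k ∈ Finset.range p, ‖(Qc k).map Complex.ofReal‖) with hCQdef
  have hCQ1 : (1 : ℝ) ≤ CQ := le_max_left _ _
  have hCQ0 : (0 : ℝ) ≤ CQ := zero_le_one.trans hCQ1
  set SQ : ℝ := ∑ k ∈ Finset.range (p - 1), ‖(Qc (k + 1)).map Complex.ofReal‖ with hSQdef
  have hSQ0 : 0 ≤ SQ := Finset.sum_nonneg fun _ _ => norm_nonneg _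
  set A2 : ℝ := (n : ℝ) * ((n.factorial : ℝ) * CQ ^ (n - 1)) with hA2def
  have hA20 : 0 ≤ A2 := by
    refine mul_nonneg (Nat.cast_nonneg _) (mul_nonneg (Nat.cast_nonneg _) ?_)
    exact pow_nonneg hCQ0 _
  refine ⟨max 1 (SQ / δ + 1), le_max_left _ _, 2 * A2 * CD,
    mul_nonneg (mul_nonneg (by norm_num) hA20) hCD0, fun z hz => ?_⟩
  have hz1 : (1 : ℝ) ≤ Complex.abs z := le_trans (le_max_left _ _) hz
  have hzpos : (0 : ℝ) < Complex.abs z := lt_of_lt_of_le one_pos hz1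
  have hz0 : z ≠ 0 := by
    intro h
    rw [h, map_zero] at hzpos
    exact lt_irrefl _ hzpos
  -- factorization Q(z) = z^(p-1) • E
  set E : Matrix (Fin n) (Fin n) ℂ :=
    ∑ k ∈ Finset.range p, (z⁻¹) ^ k • (Qc k).map Complex.ofReal with hEdef
  have hfac : polyMat (p - 1) Qc z = z ^ (p - 1) • E := by
    rw [hEdef, Finset.smul_sum, polyMat,
      show (p - 1) + 1 = p from Nat.sub_add_cancel hp]
    refine Finset.sum_congr rfl fun k hk => ?_
    rw [Finset.mem_range] at hk
    rw [smul_smul, inv_pow]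
    have hk' : k ≤ p - 1 := by omega
    have hpow : z ^ (p - 1) * (z ^ k)⁻¹ = z ^ (p - 1 - k) := by
      rw [← pow_sub_mul_pow z hk', mul_assoc, mul_inv_cancel₀ (pow_ne_zero _ hz0), mul_one]
    rw [hpow]
  -- E is near 1
  have hE1 : E - 1 = ∑ k ∈ Finset.range (p - 1),
      (z⁻¹) ^ (k + 1) • (Qc (k + 1)).map Complex.ofReal := by
    rw [hEdef, show Finset.range p = Finset.range ((p - 1) + 1) from by
        rw [Nat.sub_add_cancel hp],
      Finset.sum_range_succ' (fun k => (z⁻¹) ^ k • (Qc k).map Complex.ofReal) (p - 1)]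
    rw [pow_zero, one_smul, hQ0, Matrix.map_one _ Complex.ofReal_zero Complex.ofReal_one]
    exact add_sub_cancel_right _ _
  have hEnorm : ‖E - 1‖ ≤ SQ * (Complex.abs z)⁻¹ := by
    rw [hE1, hSQdef]
    refine (norm_sum_le _ _).trans ?_
    rw [Finset.sum_mul]
    refine Finset.sum_le_sum fun k _ => ?_
    rw [norm_smul, Complex.norm_eq_abs, map_pow, map_inv₀, mul_comm]
    refine mul_le_mul_of_nonneg_left ?_ (norm_nonneg _)
    calc (Complex.abs z)⁻¹ ^ (k + 1) ≤ (Complex.abs z)⁻¹ ^ 1 :=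
          pow_le_pow_of_le_one (inv_nonneg.mpr (AbsoluteValue.nonneg _ _))
            (inv_le_one_of_one_le₀ hz1) (by omega)
      _ = (Complex.abs z)⁻¹ := pow_one _
  have hSQz : SQ * (Complex.abs z)⁻¹ < δ := by
    have hzR : SQ / δ + 1 ≤ Complex.abs z := le_trans (le_max_right _ _) hz
    have h1 : SQ / δ ≤ Complex.abs z - 1 := by linarith
    have h2 : SQ ≤ (Complex.abs z - 1) * δ := (div_le_iff₀ hδ).mp h1
    rw [← div_eq_mul_inv, div_lt_iff₀ hzpos]
    nlinarith
  have hEnear : ∀ i j, Complex.abs ((E - 1) i j) < δ :=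
    fun i j => lt_of_le_of_lt ((entry_le_norm _ i j).trans hEnorm) hSQz
  have hdetE : Complex.abs (E.det - 1) < 1 / 2 := hdetcont E hEnear
  have hdetElb : (1 : ℝ) / 2 ≤ Complex.abs E.det := by
    have h1 : Complex.abs (1 : ℂ) ≤ Complex.abs E.det + Complex.abs ((1 : ℂ) - E.det) := by
      calc Complex.abs (1 : ℂ) = Complex.abs (E.det + (1 - E.det)) := by ring_nf
        _ ≤ _ := Complex.abs.add_le _ _
    have h2 : Complex.abs ((1 : ℂ) - E.det) = Complex.abs (E.det - 1) :=
      AbsoluteValue.map_sub _ _ _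
    rw [h2, _root_.map_one] at h1
    linarith
  have hdetQ : Complex.abs (polyMat (p - 1) Qc z).det
      = Complex.abs z ^ ((p - 1) * n) * Complex.abs E.det := by
    rw [hfac, Matrix.det_smul, _root_.map_mul, map_pow, map_pow, ← pow_mul, Fintype.card_fin]
  have hdetlb : Complex.abs z ^ ((p - 1) * n) / 2 ≤ Complex.abs (polyMat (p - 1) Qc z).det := by
    rw [hdetQ]
    calc Complex.abs z ^ ((p - 1) * n) / 2
        = Complex.abs z ^ ((p - 1) * n) * (1 / 2) := by ring
      _ ≤ Complex.abs z ^ ((p - 1) * n) * Complex.abs E.det :=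
          mul_le_mul_of_nonneg_left hdetElb (by positivity)
  have hdetne : (polyMat (p - 1) Qc z).det ≠ 0 := by
    intro h
    rw [h, map_zero] at hdetlb
    have : (0 : ℝ) < Complex.abs z ^ ((p - 1) * n) / 2 :=
      div_pos (pow_pos hzpos _) two_pos
    linarith
  refine ⟨hdetne, ?_⟩
  -- rewrite F as det⁻¹ • (adj * D)
  have hu : IsUnit (polyMat (p - 1) Qc z).det := isUnit_iff_ne_zero.mpr hdetne
  have hkey : z • (1 : Matrix (Fin n) (Fin n) ℂ) - η - (polyMat (p - 1) Qc z)⁻¹ * polyMat p Pc z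
      = ((polyMat (p - 1) Qc z).det)⁻¹ •
          ((polyMat (p - 1) Qc z).adjugate *
            (polyMat (p - 1) Qc z * (z • (1 : Matrix (Fin n) (Fin n) ℂ) - η)
              - polyMat p Pc z)) := by
    have h1 : (polyMat (p - 1) Qc z)⁻¹ *
          (polyMat (p - 1) Qc z * (z • (1 : Matrix (Fin n) (Fin n) ℂ) - η)
            - polyMat p Pc z)
        = z • (1 : Matrix (Fin n) (Fin n) ℂ) - η -
            (polyMat (p - 1) Qc z)⁻¹ * polyMat p Pc z := by
      rw [mul_sub, ← Matrix.mul_assoc, Matrix.nonsing_inv_mul _ hu, Matrix.one_mul]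
    rw [← h1, Matrix.inv_def, Ring.inverse_eq_inv', Matrix.smul_mul]
  rw [frobC_eq_norm, hkey]
  -- bound ‖D z‖ * |z|
  have hDsum := keyD hp Pc Qc hP0 hQ0 hQtop z
  have hDb : ‖polyMat (p - 1) Qc z * (z • (1 : Matrix (Fin n) (Fin n) ℂ) - η)
        - polyMat p Pc z‖ * Complex.abs z ≤ CD * Complex.abs z ^ (p - 1) := by
    rw [hDsum, hCDdef, Finset.sum_mul]
    calc ‖∑ k ∈ Finset.range (p - 1), z ^ k •
            ((Qc (p - k)).map Complex.ofReal - (Pc (p - k)).map Complex.ofReal -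
              ((Qc (p - 1 - k)).map Complex.ofReal) * η)‖ * Complex.abs z
        ≤ (∑ k ∈ Finset.range (p - 1), Complex.abs z ^ k *
            ‖(Qc (p - k)).map Complex.ofReal - (Pc (p - k)).map Complex.ofReal -
              ((Qc (p - 1 - k)).map Complex.ofReal) * η‖) * Complex.abs z := by
          refine mul_le_mul_of_nonneg_right ?_ (AbsoluteValue.nonneg _ _)
          refine (norm_sum_le _ _).trans (le_of_eq (Finset.sum_congr rfl fun k _ => ?_))
          rw [norm_smul, Complex.norm_eq_abs, map_pow]
      _ = ∑ k ∈ Finset.range (p - 1),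
            ‖(Qc (p - k)).map Complex.ofReal - (Pc (p - k)).map Complex.ofReal -
              ((Qc (p - 1 - k)).map Complex.ofReal) * η‖ * Complex.abs z ^ (k + 1) := by
          rw [Finset.sum_mul]
          exact Finset.sum_congr rfl fun k _ => by rw [pow_succ]; ring
      _ ≤ ∑ k ∈ Finset.range (p - 1),
            ‖(Qc (p - k)).map Complex.ofReal - (Pc (p - k)).map Complex.ofReal -
              ((Qc (p - 1 - k)).map Complex.ofReal) * η‖ * Complex.abs z ^ (p - 1) := by
          refine Finset.sum_le_sum fun k hk => ?_
          rw [Finset.mem_range] at hk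
          exact mul_le_mul_of_nonneg_left (pow_le_pow_right₀ hz1 (by omega)) (norm_nonneg _)
  -- entry bounds for Q and its adjugate
  have hQmEntry : ∀ i j, Complex.abs ((polyMat (p - 1) Qc z) i j)
      ≤ CQ * Complex.abs z ^ (p - 1) := by
    intro i j
    refine (entry_le_norm _ i j).trans ((norm_polyMat_le (p - 1) Qc z hz1).trans ?_)
    refine mul_le_mul_of_nonneg_right ?_ (pow_nonneg (AbsoluteValue.nonneg _ _) _)
    rw [show (p - 1) + 1 = p from Nat.sub_add_cancel hp, hCQdef]
    exact le_max_right _ _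
  have hpow1 : (1 : ℝ) ≤ Complex.abs z ^ (p - 1) := by
    calc (1 : ℝ) = 1 ^ (p - 1) := (one_pow _).symm
      _ ≤ Complex.abs z ^ (p - 1) := pow_le_pow_left₀ zero_le_one hz1 _
  have hc1 : (1 : ℝ) ≤ CQ * Complex.abs z ^ (p - 1) := by nlinarith
  have hadjb : ‖(polyMat (p - 1) Qc z).adjugate‖
      ≤ (n : ℝ) * ((n.factorial : ℝ) * (CQ * Complex.abs z ^ (p - 1)) ^ (n - 1)) := by
    refine norm_le_of_entry_le _ (mul_nonneg (Nat.cast_nonneg _)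
      (pow_nonneg (zero_le_one.trans hc1) _)) fun i j => ?_
    exact abs_adjugate_le _ hc1 hQmEntry i j
  -- assemble
  have hdetinv : (Complex.abs (polyMat (p - 1) Qc z).det)⁻¹
      ≤ 2 / Complex.abs z ^ ((p - 1) * n) := by
    have h0 : (0 : ℝ) < Complex.abs z ^ ((p - 1) * n) / 2 :=
      div_pos (pow_pos hzpos _) two_pos
    have := inv_anti₀ h0 hdetlb
    rwa [inv_div] at this
  have hprodnn : (0 : ℝ) ≤ ‖(polyMat (p - 1) Qc z).adjugate *
      (polyMat (p - 1) Qc z * (z • (1 : Matrix (Fin n) (Fin n) ℂ) - η) - polyMat p Pc z)‖ :=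
    norm_nonneg _
  rw [norm_smul, Complex.norm_eq_abs, map_inv₀]
  calc (Complex.abs (polyMat (p - 1) Qc z).det)⁻¹ *
        ‖(polyMat (p - 1) Qc z).adjugate *
          (polyMat (p - 1) Qc z * (z • (1 : Matrix (Fin n) (Fin n) ℂ) - η)
            - polyMat p Pc z)‖ * Complex.abs z
      ≤ (2 / Complex.abs z ^ ((p - 1) * n)) *
          (‖(polyMat (p - 1) Qc z).adjugate‖ *
            ‖polyMat (p - 1) Qc z * (z • (1 : Matrix (Fin n) (Fin n) ℂ) - η)
              - polyMat p Pc z‖) * Complex.abs z := by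
        refine mul_le_mul_of_nonneg_right ?_ (AbsoluteValue.nonneg _ _)
        exact mul_le_mul hdetinv (Matrix.frobenius_norm_mul _ _) hprodnn
          (div_nonneg (by norm_num) (pow_nonneg (AbsoluteValue.nonneg _ _) _))
    _ = (2 / Complex.abs z ^ ((p - 1) * n)) *
          (‖(polyMat (p - 1) Qc z).adjugate‖ *
            (‖polyMat (p - 1) Qc z * (z • (1 : Matrix (Fin n) (Fin n) ℂ) - η)
              - polyMat p Pc z‖ * Complex.abs z)) := by ring
    _ ≤ (2 / Complex.abs z ^ ((p - 1) * n)) *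
          (((n : ℝ) * ((n.factorial : ℝ) * (CQ * Complex.abs z ^ (p - 1)) ^ (n - 1))) *
            (CD * Complex.abs z ^ (p - 1))) := by
        refine mul_le_mul_of_nonneg_left ?_
          (div_nonneg (by norm_num) (pow_nonneg (AbsoluteValue.nonneg _ _) _))
        refine mul_le_mul hadjb hDb
          (mul_nonneg (norm_nonneg _) (AbsoluteValue.nonneg _ _))
          (mul_nonneg (Nat.cast_nonneg _) (mul_nonneg (Nat.cast_nonneg _)
            (pow_nonneg (zero_le_one.trans hc1) _)))
    _ = 2 * A2 * CD *
          (Complex.abs z ^ ((p - 1) * (n - 1)) * Complex.abs z ^ (p - 1)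
            / Complex.abs z ^ ((p - 1) * n)) := by
        rw [mul_pow, ← pow_mul, hA2def]
        ring
    _ = 2 * A2 * CD := by
        rw [← pow_add, show (p - 1) * (n - 1) + (p - 1) = (p - 1) * n from by
          conv_rhs => rw [show n = (n - 1) + 1 from (Nat.succ_pred_eq_of_pos hn).symm]
          exact (Nat.mul_succ _ _).symm]
        rw [div_self (pow_ne_zero _ (ne_of_gt hzpos)), mul_one]

end S18

end Statement18Aux

/-- If `det Q(z) ≠ 0` on `{Re z ≥ −ε}`, then
`z ↦ Q(z)(z Iₙ − η₀) − P(z)` has degree at most `p − 2`, and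
`sup_{x > −ε} ∫_ℝ ‖z Iₙ − η₀ − Q(z)⁻¹P(z)‖² dy < ∞` (with `z = x + iy`),
where `η₀ = Q₁ − P₁`. -/
theorem statement18 {n p : ℕ} (hn : 1 ≤ n) (hp : 1 ≤ p)
    (Pc Qc : ℕ → Matrix (Fin n) (Fin n) ℝ) (hP0 : Pc 0 = 1) (hQ0 : Qc 0 = 1)
    (hQtop : ∀ k, p ≤ k → Qc k = 0)
    (ε : ℝ) (hε : 0 < ε)
    (hQ : ∀ z : ℂ, -ε ≤ z.re → (polyMat (p - 1) Qc z).det ≠ 0) :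
    (∃ R : ℕ → Matrix (Fin n) (Fin n) ℂ,
      ∀ z : ℂ,
        polyMat (p - 1) Qc z *
            (z • (1 : Matrix (Fin n) (Fin n) ℂ) - ((Qc 1 - Pc 1).map Complex.ofReal)) -
          polyMat p Pc z = ∑ k ∈ Finset.range (p - 1), z ^ k • R k) ∧
    ((∀ x : ℝ, -ε < x → Integrable (fun y : ℝ =>
        frobC (((x : ℂ) + (y : ℂ) * Complex.I) • (1 : Matrix (Fin n) (Fin n) ℂ) -
          ((Qc 1 - Pc 1).map Complex.ofReal) -
          (polyMat (p - 1) Qc ((x : ℂ) + (y : ℂ) * Complex.I))⁻¹ *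
            polyMat p Pc ((x : ℂ) + (y : ℂ) * Complex.I)) ^ 2) volume) ∧
      ∃ M : ℝ, ∀ x : ℝ, -ε < x →
        (∫ y : ℝ, frobC (((x : ℂ) + (y : ℂ) * Complex.I) • (1 : Matrix (Fin n) (Fin n) ℂ) -
          ((Qc 1 - Pc 1).map Complex.ofReal) -
          (polyMat (p - 1) Qc ((x : ℂ) + (y : ℂ) * Complex.I))⁻¹ *
            polyMat p Pc ((x : ℂ) + (y : ℂ) * Complex.I)) ^ 2) ≤ M) := by
  classical
  constructor
  · exact ⟨fun k => (Qc (p - k)).map Complex.ofReal - (Pc (p - k)).map Complex.ofReal -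
      ((Qc (p - 1 - k)).map Complex.ofReal) * ((Qc 1 - Pc 1).map Complex.ofReal),
      fun z => S18.keyD hp Pc Qc hP0 hQ0 hQtop z⟩
  obtain ⟨R, hR1, C1, hC10, hbig⟩ := S18.bigz hp hn Pc Qc hP0 hQ0 hQtop
  have hre : ∀ x y : ℝ, ((x : ℂ) + (y : ℂ) * Complex.I).re = x := fun x y => by simp
  have him : ∀ x y : ℝ, ((x : ℂ) + (y : ℂ) * Complex.I).im = y := fun x y => by simp
  -- compact bound
  have hKc : IsCompact (Metric.closedBall (0 : ℂ) R ∩ {z : ℂ | -ε ≤ z.re}) :=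
    (isCompact_closedBall 0 R).inter_right (isClosed_le continuous_const Complex.continuous_re)
  have hcont : ContinuousOn (fun z : ℂ => frobC (z • (1 : Matrix (Fin n) (Fin n) ℂ) -
      (Qc 1 - Pc 1).map Complex.ofReal - (polyMat (p - 1) Qc z)⁻¹ * polyMat p Pc z))
      (Metric.closedBall (0 : ℂ) R ∩ {z : ℂ | -ε ≤ z.re}) :=
    fun z hz => (S18.contF p Pc Qc z (hQ z hz.2)).continuousWithinAt
  obtain ⟨B, hB⟩ := hKc.exists_bound_of_continuousOn hcont
  set B' : ℝ := max B 0 with hB'def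
  set Cmaj : ℝ := max (B' ^ 2 * (1 + R ^ 2)) (2 * C1 ^ 2) with hCmajdef
  have hCmaj0 : 0 ≤ Cmaj := le_trans (by positivity) (le_max_right _ _)
  -- pointwise bound
  have hpoint : ∀ x : ℝ, -ε < x → ∀ y : ℝ,
      frobC (((x : ℂ) + (y : ℂ) * Complex.I) • (1 : Matrix (Fin n) (Fin n) ℂ) -
        ((Qc 1 - Pc 1).map Complex.ofReal) -
        (polyMat (p - 1) Qc ((x : ℂ) + (y : ℂ) * Complex.I))⁻¹ *
          polyMat p Pc ((x : ℂ) + (y : ℂ) * Complex.I)) ^ 2 ≤ Cmaj * (1 + y ^ 2)⁻¹ := by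
    intro x hx y
    set z : ℂ := (x : ℂ) + (y : ℂ) * Complex.I with hzdef
    set f : ℝ := frobC (z • (1 : Matrix (Fin n) (Fin n) ℂ) -
        ((Qc 1 - Pc 1).map Complex.ofReal) -
        (polyMat (p - 1) Qc z)⁻¹ * polyMat p Pc z) with hfdef
    have hfnn : 0 ≤ f := Real.sqrt_nonneg _
    have hy2 : (0 : ℝ) < 1 + y ^ 2 := by positivity
    have habs2 : Complex.abs z ^ 2 = x ^ 2 + y ^ 2 := by
      rw [Complex.sq_abs, Complex.normSq_apply, hzdef, hre x y, him x y]
      ring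
    have hmain : f ^ 2 * (1 + y ^ 2) ≤ Cmaj := by
      rcases le_or_gt (Complex.abs z) R with hcase | hcase
      · have hzK : z ∈ Metric.closedBall (0 : ℂ) R ∩ {w : ℂ | -ε ≤ w.re} := by
          constructor
          · rw [Metric.mem_closedBall, Complex.dist_eq, sub_zero]
            exact hcase
          · rw [Set.mem_setOf_eq, hzdef, hre x y]
            exact hx.le
        have h1 : f ≤ B' := by
          have h2 := hB z hzK
          rw [Real.norm_eq_abs] at h2
          exact le_trans (le_abs_self _) (le_trans h2 (le_max_left _ _))
        have hy2R : y ^ 2 ≤ R ^ 2 := by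
          have h3 : Complex.abs z ^ 2 ≤ R ^ 2 :=
            pow_le_pow_left₀ (AbsoluteValue.nonneg _ _) hcase 2
          nlinarith [sq_nonneg x]
        have hB'0 : (0 : ℝ) ≤ B' := le_max_right _ _
        have hstep : f ^ 2 * (1 + y ^ 2) ≤ B' ^ 2 * (1 + R ^ 2) := by
          nlinarith [mul_le_mul h1 h1 hfnn hB'0, hy2R, sq_nonneg y, sq_nonneg f]
        exact hstep.trans (le_max_left _ _)
      · obtain ⟨hdet, hFb⟩ := hbig z hcase.le
        have hz1 : (1 : ℝ) ≤ Complex.abs z := hR1.trans hcase.le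
        have e1 : f ^ 2 * (x ^ 2 + y ^ 2) ≤ C1 ^ 2 := by
          have h4 := mul_le_mul hFb hFb
            (mul_nonneg hfnn (AbsoluteValue.nonneg _ _)) hC10
          nlinarith [habs2]
        have e2 : (1 : ℝ) ≤ x ^ 2 + y ^ 2 := by nlinarith [habs2]
        have e3 : y ^ 2 ≤ x ^ 2 + y ^ 2 := by nlinarith [sq_nonneg x]
        calc f ^ 2 * (1 + y ^ 2)
            ≤ f ^ 2 * ((x ^ 2 + y ^ 2) + (x ^ 2 + y ^ 2)) := by nlinarith [sq_nonneg f]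
          _ = 2 * (f ^ 2 * (x ^ 2 + y ^ 2)) := by ring
          _ ≤ 2 * C1 ^ 2 := by linarith
          _ ≤ Cmaj := le_max_right _ _
    calc f ^ 2 = f ^ 2 * (1 + y ^ 2) * (1 + y ^ 2)⁻¹ := by field_simp
      _ ≤ Cmaj * (1 + y ^ 2)⁻¹ :=
          mul_le_mul_of_nonneg_right hmain (inv_nonneg.mpr hy2.le)
  -- continuity in y
  have hcy : ∀ x : ℝ, -ε < x → Continuous (fun y : ℝ =>
      frobC (((x : ℂ) + (y : ℂ) * Complex.I) • (1 : Matrix (Fin n) (Fin n) ℂ) -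
        ((Qc 1 - Pc 1).map Complex.ofReal) -
        (polyMat (p - 1) Qc ((x : ℂ) + (y : ℂ) * Complex.I))⁻¹ *
          polyMat p Pc ((x : ℂ) + (y : ℂ) * Complex.I)) ^ 2) := by
    intro x hx
    rw [continuous_iff_continuousAt]
    intro y
    have h1 : ContinuousAt (fun y : ℝ => ((x : ℂ) + (y : ℂ) * Complex.I)) y :=
      (continuous_const.add (Complex.continuous_ofReal.mul continuous_const)).continuousAt
    have h2 := S18.contF p Pc Qc ((x : ℂ) + (y : ℂ) * Complex.I)
      (hQ _ (by rw [hre x y]; exact hx.le))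
    exact ContinuousAt.pow (ContinuousAt.comp
      (f := fun y : ℝ => ((x : ℂ) + (y : ℂ) * Complex.I)) h2 h1) 2
  have hmaj : Integrable (fun y : ℝ => Cmaj * (1 + y ^ 2)⁻¹) volume :=
    integrable_inv_one_add_sq.const_mul Cmaj
  have hint : ∀ x : ℝ, -ε < x → Integrable (fun y : ℝ =>
      frobC (((x : ℂ) + (y : ℂ) * Complex.I) • (1 : Matrix (Fin n) (Fin n) ℂ) -
        ((Qc 1 - Pc 1).map Complex.ofReal) -
        (polyMat (p - 1) Qc ((x : ℂ) + (y : ℂ) * Complex.I))⁻¹ *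
          polyMat p Pc ((x : ℂ) + (y : ℂ) * Complex.I)) ^ 2) volume := by
    intro x hx
    refine hmaj.mono' ((hcy x hx).aestronglyMeasurable) ?_
    refine Filter.Eventually.of_forall fun y => ?_
    rw [Real.norm_of_nonneg (sq_nonneg _)]
    exact hpoint x hx y
  refine ⟨hint, Cmaj * ∫ y : ℝ, (1 + y ^ 2)⁻¹, fun x hx => ?_⟩
  calc (∫ y : ℝ, frobC (((x : ℂ) + (y : ℂ) * Complex.I) • (1 : Matrix (Fin n) (Fin n) ℂ) -
        ((Qc 1 - Pc 1).map Complex.ofReal) -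
        (polyMat (p - 1) Qc ((x : ℂ) + (y : ℂ) * Complex.I))⁻¹ *
          polyMat p Pc ((x : ℂ) + (y : ℂ) * Complex.I)) ^ 2)
      ≤ ∫ y : ℝ, Cmaj * (1 + y ^ 2)⁻¹ :=
        integral_mono (hint x hx) hmaj (hpoint x hx)
    _ = Cmaj * ∫ y : ℝ, (1 + y ^ 2)⁻¹ := integral_const_mul _ _
end
end
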